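/- Let A be an m×m primitive nonnegative real matrix with Perron root (spectral radius) r, and let p and q be positive right eigenvectors of A and Aᵀ respectively for eigenvalue r. Then (A/r)^n converges entrywise to p qᵀ/(qᵀ p) as n → ∞, and in particular every entry of A^n is Θ(r^n). -/

import Mathlib

open Filter Matrix


open Filter Matrix Finset

namespace PFaux

variable {m : ℕ}

lemma row_sum_pow (P : Matrix (Fin m) (Fin m) ℝ) (hrow : ∀ i, ∑ j, P i j = 1) :
    ∀ (n : ℕ) (i), ∑ j, (P ^ n) i j = 1 := by
  intro n
  induction n with
  | zero => intro i; simp [Matrix.one_apply]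
  | succ n ih =>
      intro i
      rw [pow_succ]
      simp only [Matrix.mul_apply]
      rw [Finset.sum_comm]
      simp only [← Finset.mul_sum, hrow]
      simpa using ih i

lemma sup'_osc_contract (hm : 0 < m) (Q : Matrix (Fin m) (Fin m) ℝ) (δ : ℝ)
    (hδ : ∀ i j, δ ≤ Q i j) (hrow : ∀ i, ∑ j, Q i j = 1) (x : Fin m → ℝ) :
    let ne : (Finset.univ : Finset (Fin m)).Nonempty := ⟨⟨0, hm⟩, Finset.mem_univ _⟩
    Finset.univ.sup' ne (Q.mulVec x) - Finset.univ.inf' ne (Q.mulVec x) ≤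
      (1 - m * δ) * (Finset.univ.sup' ne x - Finset.univ.inf' ne x) := by
  intro ne
  have key : ∀ i k : Fin m, Q.mulVec x i - Q.mulVec x k ≤
      (1 - m * δ) * (Finset.univ.sup' ne x - Finset.univ.inf' ne x) := by
    intro i k
    have hsum : ∀ i : Fin m, ∑ j, (Q i j - δ) = 1 - m * δ := by
      intro i
      rw [Finset.sum_sub_distrib, hrow, Finset.sum_const]
      simp [mul_comm]
    have hup : ∑ j, (Q i j - δ) * x j ≤ (1 - m * δ) * Finset.univ.sup' ne x := by
      rw [← hsum i, Finset.sum_mul]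
      refine Finset.sum_le_sum fun j _ => ?_
      exact mul_le_mul_of_nonneg_left (Finset.le_sup' x (Finset.mem_univ j))
        (by linarith [hδ i j])
    have hlo : (1 - m * δ) * Finset.univ.inf' ne x ≤ ∑ j, (Q k j - δ) * x j := by
      rw [← hsum k, Finset.sum_mul]
      refine Finset.sum_le_sum fun j _ => ?_
      exact mul_le_mul_of_nonneg_left (Finset.inf'_le x (Finset.mem_univ j))
        (by linarith [hδ k j])
    have hvi : Q.mulVec x i = (∑ j, (Q i j - δ) * x j) + δ * ∑ j, x j := by
      simp only [Matrix.mulVec, dotProduct, sub_mul, Finset.sum_sub_distrib,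
        Finset.mul_sum]
      ring
    have hvk : Q.mulVec x k = (∑ j, (Q k j - δ) * x j) + δ * ∑ j, x j := by
      simp only [Matrix.mulVec, dotProduct, sub_mul, Finset.sum_sub_distrib,
        Finset.mul_sum]
      ring
    rw [hvi, hvk]
    have := sub_le_sub hup hlo
    rw [← mul_sub] at this
    linarith
  obtain ⟨i, _, hi⟩ := Finset.exists_mem_eq_sup' ne (Q.mulVec x)
  obtain ⟨k, _, hk⟩ := Finset.exists_mem_eq_inf' ne (Q.mulVec x)
  rw [hi, hk]
  exact key i k

lemma mulVec_le_sup' (hm : 0 < m) (P : Matrix (Fin m) (Fin m) ℝ)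
    (hP0 : ∀ i j, 0 ≤ P i j) (hrow : ∀ i, ∑ j, P i j = 1) (x : Fin m → ℝ) (i : Fin m) :
    P.mulVec x i ≤ Finset.univ.sup' ⟨⟨0, hm⟩, Finset.mem_univ _⟩ x := by
  have : P.mulVec x i ≤ ∑ j, P i j * Finset.univ.sup' ⟨⟨0, hm⟩, Finset.mem_univ _⟩ x := by
    simp only [Matrix.mulVec, dotProduct]
    refine Finset.sum_le_sum fun j _ => ?_
    exact mul_le_mul_of_nonneg_left (Finset.le_sup' x (Finset.mem_univ j)) (hP0 i j)
  calc P.mulVec x i ≤ _ := this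
    _ = _ := by rw [← Finset.sum_mul, hrow, one_mul]

lemma inf'_le_mulVec (hm : 0 < m) (P : Matrix (Fin m) (Fin m) ℝ)
    (hP0 : ∀ i j, 0 ≤ P i j) (hrow : ∀ i, ∑ j, P i j = 1) (x : Fin m → ℝ) (i : Fin m) :
    Finset.univ.inf' ⟨⟨0, hm⟩, Finset.mem_univ _⟩ x ≤ P.mulVec x i := by
  have : (∑ j, P i j * Finset.univ.inf' ⟨⟨0, hm⟩, Finset.mem_univ _⟩ x) ≤ P.mulVec x i := by
    simp only [Matrix.mulVec, dotProduct]
    refine Finset.sum_le_sum fun j _ => ?_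
    exact mul_le_mul_of_nonneg_left (Finset.inf'_le x (Finset.mem_univ j)) (hP0 i j)
  calc Finset.univ.inf' ⟨⟨0, hm⟩, Finset.mem_univ _⟩ x
      = ∑ j, P i j * Finset.univ.inf' ⟨⟨0, hm⟩, Finset.mem_univ _⟩ x := by
        rw [← Finset.sum_mul, hrow, one_mul]
    _ ≤ _ := this

end PFaux


namespace PFaux2

lemma key {m : ℕ} (hm : 0 < m) (P : Matrix (Fin m) (Fin m) ℝ)
    (hP0 : ∀ i j, 0 ≤ P i j) (hrow : ∀ i, ∑ j, P i j = 1)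
    (N : ℕ) (δ : ℝ) (hδpos : 0 < δ) (hδ : ∀ i j, δ ≤ (P ^ N) i j)
    (x : Fin m → ℝ) :
    ∃ L : ℝ, ∀ i, Tendsto (fun n => ((P ^ n).mulVec x) i) atTop (nhds L) := by
  have ne : (Finset.univ : Finset (Fin m)).Nonempty := ⟨⟨0, hm⟩, Finset.mem_univ _⟩
  set v : ℕ → Fin m → ℝ := fun n => (P ^ n).mulVec x with hv
  set a : ℕ → ℝ := fun n => Finset.univ.inf' ne (v n) with ha
  set b : ℕ → ℝ := fun n => Finset.univ.sup' ne (v n) with hb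
  have hvsucc : ∀ n, v (n + 1) = P.mulVec (v n) := by
    intro n
    rw [hv]
    simp only
    rw [pow_succ', ← Matrix.mulVec_mulVec]
  have hpow0 : ∀ n i j, 0 ≤ (P ^ n) i j := by
    intro n
    induction n with
    | zero => intro i j; simp [Matrix.one_apply]; positivity
    | succ n ih =>
        intro i j
        rw [pow_succ, Matrix.mul_apply]
        exact Finset.sum_nonneg fun k _ => mul_nonneg (ih i k) (hP0 k j)
  have hrown : ∀ n i, ∑ j, (P ^ n) i j = 1 := PFaux.row_sum_pow P hrow
  have hamono : Monotone a := by
    refine monotone_nat_of_le_succ fun n => ?_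
    have : ∀ i, a n ≤ v (n + 1) i := by
      intro i
      rw [hvsucc n]
      exact PFaux.inf'_le_mulVec hm P hP0 hrow (v n) i
    exact Finset.le_inf' ne _ fun i _ => this i
  have hbanti : Antitone b := by
    refine antitone_nat_of_succ_le fun n => ?_
    have : ∀ i, v (n + 1) i ≤ b n := by
      intro i
      rw [hvsucc n]
      exact PFaux.mulVec_le_sup' hm P hP0 hrow (v n) i
    exact Finset.sup'_le ne _ fun i _ => this i
  set d : ℕ → ℝ := fun n => b n - a n with hd
  have hdnonneg : ∀ n, 0 ≤ d n := by
    intro n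
    have h1 := Finset.inf'_le (v n) (Finset.mem_univ (⟨0, hm⟩ : Fin m))
    have h2 := Finset.le_sup' (v n) (Finset.mem_univ (⟨0, hm⟩ : Fin m))
    simp only [hd]
    linarith
  have hdanti : Antitone d := by
    intro n n' h
    simp only [hd]
    have := hamono h
    have := hbanti h
    linarith
  set θ : ℝ := 1 - m * δ with hθ
  have hθlt : θ < 1 := by
    have : (0:ℝ) < m * δ := mul_pos (by exact_mod_cast hm) hδpos
    simp only [hθ]; linarith
  have hθ0 : 0 ≤ θ := by
    have h1 := hrown N ⟨0, hm⟩
    have h2 : (m : ℝ) * δ ≤ ∑ j, (P ^ N) ⟨0, hm⟩ j := by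
      calc (m:ℝ) * δ = ∑ _j : Fin m, δ := by simp [mul_comm]
        _ ≤ _ := Finset.sum_le_sum fun j _ => hδ _ j
    simp only [hθ]; rw [h1] at h2; linarith
  have hcontr : ∀ n, d (N + n) ≤ θ * d n := by
    intro n
    have hvNn : v (N + n) = (P ^ N).mulVec (v n) := by
      rw [hv]; simp only
      rw [pow_add, ← Matrix.mulVec_mulVec]
    have := PFaux.sup'_osc_contract hm (P ^ N) δ hδ (hrown N) (v n)
    simp only at this
    rw [← hvNn] at this
    exact this
  have hdk : ∀ k, d (k * N) ≤ θ ^ k * d 0 := by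
    intro k
    induction k with
    | zero => simp
    | succ k ih =>
        have : d ((k + 1) * N) = d (N + k * N) := by ring_nf
        rw [this, pow_succ]
        calc d (N + k * N) ≤ θ * d (k * N) := hcontr _
          _ ≤ θ * (θ ^ k * d 0) := by
              exact mul_le_mul_of_nonneg_left ih hθ0
          _ = θ ^ k * θ * d 0 := by ring
  -- d tends to 0
  have hdbdd : BddBelow (Set.range d) := ⟨0, by rintro _ ⟨n, rfl⟩; exact hdnonneg n⟩
  have hdtend : Tendsto d atTop (nhds (⨅ n, d n)) :=
    tendsto_atTop_ciInf hdanti hdbdd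
  have hinf0 : (⨅ n, d n) = 0 := by
    have h1 : 0 ≤ ⨅ n, d n := le_ciInf hdnonneg
    have h2 : Tendsto (fun k => θ ^ k * d 0) atTop (nhds 0) := by
      have := tendsto_pow_atTop_nhds_zero_of_lt_one hθ0 hθlt
      simpa using this.mul_const (d 0)
    have h3 : (⨅ n, d n) ≤ 0 := by
      refine ge_of_tendsto h2 (Eventually.of_forall fun k => ?_)
      exact le_trans (ciInf_le hdbdd (k * N)) (hdk k)
    linarith
  rw [hinf0] at hdtend
  -- a tends to some L
  have habdd : BddAbove (Set.range a) := by
    refine ⟨b 0, ?_⟩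
    rintro _ ⟨n, rfl⟩
    have h1 : a n ≤ b n := by
      have := hdnonneg n
      simp only [hd] at this
      linarith
    exact le_trans h1 (hbanti (Nat.zero_le n))
  have hatend : Tendsto a atTop (nhds (⨆ n, a n)) := tendsto_atTop_ciSup hamono habdd
  set L : ℝ := ⨆ n, a n with hL
  have hbtend : Tendsto b atTop (nhds L) := by
    have : Tendsto (fun n => a n + d n) atTop (nhds (L + 0)) := hatend.add hdtend
    simp only [add_zero] at this
    convert this using 2 with n
    simp only [hd]; ring
  refine ⟨L, fun i => ?_⟩
  refine tendsto_of_tendsto_of_tendsto_of_le_of_le hatend hbtend ?_ ?_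
  · intro n; exact Finset.inf'_le (v n) (Finset.mem_univ i)
  · intro n; exact Finset.le_sup' (v n) (Finset.mem_univ i)

end PFaux2


/-- Perron–Frobenius limit: for a primitive nonnegative matrix `A` with Perron root
`r` (the spectral radius) and positive eigenvectors `p` of `A` and `q` of `Aᵀ` for
eigenvalue `r`, the powers `(A/r)^n` converge entrywise to `p qᵀ/(qᵀ p)`; in
particular every entry of `A^n` is `Θ(r^n)`. -/
theorem perron_frobenius_limit (m : ℕ) (A : Matrix (Fin m) (Fin m) ℝ)
    (hnn : ∀ i j, 0 ≤ A i j) (hprim : ∃ N : ℕ, ∀ i j, 0 < (A ^ N) i j)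
    (r : ℝ) (hr : 0 < r)
    (hspec : ∀ μ ∈ spectrum ℂ (A.map (Complex.ofReal ·)), ‖μ‖ ≤ r)
    (p q : Fin m → ℝ) (hp : ∀ i, 0 < p i) (hq : ∀ i, 0 < q i)
    (hAp : A.mulVec p = r • p) (hAq : Aᵀ.mulVec q = r • q) :
    (∀ i j, Tendsto (fun n : ℕ => ((r⁻¹ • A) ^ n) i j) atTop
        (nhds (p i * q j / ∑ x, q x * p x))) ∧
      ∀ i j, ∃ c C : ℝ, 0 < c ∧
        ∀ᶠ n : ℕ in atTop, c * r ^ n ≤ (A ^ n) i j ∧ (A ^ n) i j ≤ C * r ^ n := by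
  rcases Nat.eq_zero_or_pos m with hm | hm
  · subst hm
    exact ⟨fun i => i.elim0, fun i => i.elim0⟩
  have ne : (Finset.univ : Finset (Fin m)).Nonempty := ⟨⟨0, hm⟩, Finset.mem_univ _⟩
  set B : Matrix (Fin m) (Fin m) ℝ := r⁻¹ • A with hB
  have hBpow : ∀ n, B ^ n = (r⁻¹) ^ n • A ^ n := fun n => smul_pow r⁻¹ A n
  have hBentry : ∀ n i j, (B ^ n) i j = (r⁻¹) ^ n * (A ^ n) i j := by
    intro n i j; rw [hBpow n]; simp
  have hAentry : ∀ n i j, (A ^ n) i j = r ^ n * (B ^ n) i j := by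
    intro n i j
    rw [hBentry n i j, ← mul_assoc, ← mul_pow, mul_inv_cancel₀ hr.ne', one_pow, one_mul]
  have hBp : B.mulVec p = p := by
    rw [hB, Matrix.smul_mulVec, hAp, smul_smul, inv_mul_cancel₀ hr.ne', one_smul]
  -- stochastic matrix P
  set P : Matrix (Fin m) (Fin m) ℝ := Matrix.of (fun i j => B i j * p j * (p i)⁻¹) with hP
  have hPapp : ∀ i j, P i j = B i j * p j * (p i)⁻¹ := fun i j => rfl
  have hPn : ∀ n i j, (P ^ n) i j = (B ^ n) i j * p j * (p i)⁻¹ := by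
    intro n
    induction n with
    | zero =>
        intro i j
        rcases eq_or_ne i j with h | h
        · subst h; simp [Matrix.one_apply, mul_inv_cancel₀ (hp i).ne']
        · simp [Matrix.one_apply, h]
    | succ n ih =>
        intro i j
        rw [pow_succ, Matrix.mul_apply, pow_succ, Matrix.mul_apply,
          Finset.sum_mul, Finset.sum_mul]
        refine Finset.sum_congr rfl fun k _ => ?_
        rw [ih i k, hPapp k j,
          show (B ^ n) i k * p k * (p i)⁻¹ * (B k j * p j * (p k)⁻¹)
              = (B ^ n) i k * B k j * p j * (p i)⁻¹ * (p k * (p k)⁻¹) from by ring,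
          mul_inv_cancel₀ (hp k).ne', mul_one]
  have hB0 : ∀ i j, 0 ≤ B i j := fun i j => by
    rw [hB]; simpa using mul_nonneg (inv_nonneg.2 hr.le) (hnn i j)
  have hP0 : ∀ i j, 0 ≤ P i j := fun i j =>
    mul_nonneg (mul_nonneg (hB0 i j) (hp j).le) (inv_nonneg.2 (hp i).le)
  have hrow : ∀ i, ∑ j, P i j = 1 := by
    intro i
    have : ∑ j, P i j = (B.mulVec p) i * (p i)⁻¹ := by
      rw [Matrix.mulVec, dotProduct, Finset.sum_mul]
      exact Finset.sum_congr rfl fun j _ => rfl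
    rw [this, hBp, mul_inv_cancel₀ (hp i).ne']
  -- positivity of P^N
  obtain ⟨N, hN⟩ := hprim
  have hPNpos : ∀ i j, 0 < (P ^ N) i j := by
    intro i j
    rw [hPn N i j, hBentry N i j]
    have : 0 < (r⁻¹) ^ N * (A ^ N) i j :=
      mul_pos (pow_pos (inv_pos.2 hr) N) (hN i j)
    exact mul_pos (mul_pos this (hp j)) (inv_pos.2 (hp i))
  set δ : ℝ := (Finset.univ : Finset (Fin m × Fin m)).inf'
      ⟨(⟨0, hm⟩, ⟨0, hm⟩), Finset.mem_univ _⟩ (fun ij => (P ^ N) ij.1 ij.2) with hδdef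
  have hδpos : 0 < δ := by
    rw [hδdef]
    exact (Finset.lt_inf'_iff (H := _)).2 fun ij _ => hPNpos ij.1 ij.2
  have hδle : ∀ i j, δ ≤ (P ^ N) i j := fun i j =>
    Finset.inf'_le _ (Finset.mem_univ (i, j))
  -- invariant left eigenvector
  set w : Fin m → ℝ := fun i => q i * p i with hw
  have hwP : ∀ j, ∑ i, w i * P i j = w j := by
    intro j
    have hAtq : ∀ j, ∑ i, A i j * q i = r * q j := by
      intro j
      have := congrFun hAq j
      rw [Matrix.mulVec, dotProduct] at this
      simp only [Matrix.transpose_apply, Pi.smul_apply, smul_eq_mul] at this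
      exact this
    have : ∑ i, w i * P i j = r⁻¹ * p j * ∑ i, A i j * q i := by
      rw [Finset.mul_sum]
      refine Finset.sum_congr rfl fun i _ => ?_
      rw [hw, hPapp i j, hB]
      simp only [Matrix.smul_apply, smul_eq_mul]
      rw [show q i * p i * (r⁻¹ * A i j * p j * (p i)⁻¹)
          = r⁻¹ * p j * (A i j * q i) * (p i * (p i)⁻¹) from by ring,
        mul_inv_cancel₀ (hp i).ne', mul_one]
    rw [this, hAtq j, hw,
      show r⁻¹ * p j * (r * q j) = (q j * p j) * (r * r⁻¹) from by ring,
      mul_inv_cancel₀ hr.ne', mul_one]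
  have hwsum_pos : 0 < ∑ i, w i :=
    Finset.sum_pos (fun i _ => mul_pos (hq i) (hp i)) ne
  have hinv : ∀ (x : Fin m → ℝ) (n : ℕ),
      ∑ i, w i * ((P ^ n).mulVec x) i = ∑ i, w i * x i := by
    intro x n
    induction n with
    | zero => simp [Matrix.mulVec_one]
    | succ n ih =>
        have hstep : ∀ y : Fin m → ℝ, ∑ i, w i * (P.mulVec y) i = ∑ i, w i * y i := by
          intro y
          simp only [Matrix.mulVec, dotProduct, Finset.mul_sum]
          rw [Finset.sum_comm]
          refine Finset.sum_congr rfl fun j _ => ?_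
          simp only [← mul_assoc]
          rw [← Finset.sum_mul, hwP j]
        have : (P ^ (n+1)).mulVec x = P.mulVec ((P ^ n).mulVec x) := by
          rw [pow_succ', ← Matrix.mulVec_mulVec]
        rw [this, hstep, ih]
  -- main convergence for each column j
  have hmain : ∀ i j, Tendsto (fun n : ℕ => (P ^ n) i j) atTop
      (nhds (w j / ∑ i, w i)) := by
    intro i j
    obtain ⟨L, hL⟩ := PFaux2.key hm P hP0 hrow N δ hδpos hδle (Pi.single j 1)
    have hcol : ∀ n i, ((P ^ n).mulVec (Pi.single j 1)) i = (P ^ n) i j := by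
      intro n i
      rw [Matrix.mulVec_single]
      simp
    have hLval : L = w j / ∑ i, w i := by
      have h1 : Tendsto (fun n => ∑ i, w i * ((P ^ n).mulVec (Pi.single j 1)) i)
          atTop (nhds (∑ i, w i * L)) :=
        tendsto_finset_sum _ fun i _ => (hL i).const_mul (w i)
      have h2 : ∀ n, ∑ i, w i * ((P ^ n).mulVec (Pi.single j 1)) i = w j := by
        intro n
        rw [hinv (Pi.single j 1) n]
        simp [Pi.single_apply, mul_comm]
      have h3 : Tendsto (fun _ : ℕ => w j) atTop (nhds (∑ i, w i * L)) := by
        convert h1 using 2 with n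
        exact (h2 n).symm
      have h4 : ∑ i, w i * L = w j := tendsto_nhds_unique h3 tendsto_const_nhds
      rw [← Finset.sum_mul] at h4
      field_simp
      linarith [h4]
    have := hL i
    rw [hLval] at this
    convert this using 2 with n
    exact (hcol n i).symm
  -- transfer to B
  have hBtend : ∀ i j, Tendsto (fun n : ℕ => (B ^ n) i j) atTop
      (nhds (p i * q j / ∑ x, q x * p x)) := by
    intro i j
    have h1 : ∀ n, (B ^ n) i j = (P ^ n) i j * p i * (p j)⁻¹ := by
      intro n
      rw [hPn n i j,
        show (B ^ n) i j * p j * (p i)⁻¹ * p i * (p j)⁻¹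
            = (B ^ n) i j * (p j * (p j)⁻¹) * ((p i)⁻¹ * p i) from by ring,
        mul_inv_cancel₀ (hp j).ne', inv_mul_cancel₀ (hp i).ne', mul_one, mul_one]
    have h2 : Tendsto (fun n : ℕ => (P ^ n) i j * p i * (p j)⁻¹) atTop
        (nhds ((w j / ∑ i, w i) * p i * (p j)⁻¹)) :=
      ((hmain i j).mul_const (p i)).mul_const ((p j)⁻¹)
    have h3 : (w j / ∑ i, w i) * p i * (p j)⁻¹ = p i * q j / ∑ x, q x * p x := by
      rw [hw]
      simp only
      rw [div_mul_eq_mul_div, div_mul_eq_mul_div]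
      congr 1
      rw [show q j * p j * p i * (p j)⁻¹ = p i * q j * (p j * (p j)⁻¹) from by ring,
        mul_inv_cancel₀ (hp j).ne', mul_one]
    rw [← h3]
    convert h2 using 2 with n
    exact h1 n
  refine ⟨hBtend, fun i j => ?_⟩
  set Lij : ℝ := p i * q j / ∑ x, q x * p x with hLij
  have hLpos : 0 < Lij := by
    rw [hLij]
    apply div_pos (mul_pos (hp i) (hq j))
    refine Finset.sum_pos (fun x _ => mul_pos (hq x) (hp x)) ne
  refine ⟨Lij / 2, Lij + 1, by linarith, ?_⟩
  have hev1 : ∀ᶠ n : ℕ in atTop, Lij / 2 < (B ^ n) i j :=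
    (hBtend i j).eventually (eventually_gt_nhds (by linarith))
  have hev2 : ∀ᶠ n : ℕ in atTop, (B ^ n) i j < Lij + 1 :=
    (hBtend i j).eventually (eventually_lt_nhds (by linarith))
  filter_upwards [hev1, hev2] with n h1 h2
  have hrn : (0:ℝ) < r ^ n := pow_pos hr n
  rw [hAentry n i j]
  constructor
  · calc Lij / 2 * r ^ n ≤ (B ^ n) i j * r ^ n := by nlinarith
      _ = r ^ n * (B ^ n) i j := by ring
  · calc r ^ n * (B ^ n) i j ≤ r ^ n * (Lij + 1) := by nlinarith
      _ = (Lij + 1) * r ^ n := by ring
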